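/- Let R be a prime ring with involution * of characteristic different from 2 (i.e., there exists x ∈ R with x + x ≠ 0), and let b ∈ R with b ∉ Z(R). If b commutes with [x, y] − ([x, y])* for all x, y ∈ R (i.e., b·([x,y] − ([x,y])*) = ([x,y] − ([x,y])*)·b for all x, y ∈ R, where [x,y] = xy − yx), then s·t ∈ Z(R) for all s, t ∈ K₀(R) (i.e., K₀(R)² ⊆ Z(R)). -/

import Mathlib

set_option linter.unusedSectionVars false

section StmtAux
variable {R : Type*} [NonUnitalRing R]

/-- commutator -/
private def cm (a c : R) : R := a * c - c * a

private lemma cm_def (a c : R) : cm a c = a * c - c * a := rfl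

private lemma cm_add (a u v : R) : cm a (u + v) = cm a u + cm a v := by
  simp only [cm]; noncomm_ring

private lemma cm_zero' (a : R) : cm a (0 : R) = 0 := by simp [cm]

private lemma jacobi (a u v : R) : cm a (cm u v) = cm (cm a u) v + cm u (cm a v) := by
  simp only [cm]; noncomm_ring

private lemma aux_h2 (hprime : ∀ a b : R, (∀ x : R, a * x * b = 0) → a = 0 ∨ b = 0)
    (hchar : ∃ x : R, x + x ≠ 0) : ∀ w : R, w + w = 0 → w = 0 := by
  obtain ⟨a, ha⟩ := hchar
  intro w hw
  rcases hprime w (a + a) (fun x => by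
    have h : w * x * (a + a) = (w + w) * (x * a) := by noncomm_ring
    rw [h, hw, zero_mul]) with h | h
  · exact h
  · exact absurd h ha

private lemma aux_zcancel (hprime : ∀ a b : R, (∀ x : R, a * x * b = 0) → a = 0 ∨ b = 0)
    (z : R) (hz : ∀ r : R, z * r = r * z) (hz0 : z ≠ 0) (w : R) (h : z * w = 0) : w = 0 := by
  rcases hprime z w (fun x => by rw [hz x, mul_assoc, h, mul_zero]) with h' | h'
  · exact absurd h' hz0
  · exact h'

private lemma aux_znil (hprime : ∀ a b : R, (∀ x : R, a * x * b = 0) → a = 0 ∨ b = 0)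
    (z : R) (hz : ∀ r : R, z * r = r * z) (h : z * z = 0) : z = 0 := by
  rcases hprime z z (fun x => by rw [hz x, mul_assoc, h, mul_zero]) with h' | h'
  · exact h'
  · exact h'

private lemma aux_lemC (hprime : ∀ a b : R, (∀ x : R, a * x * b = 0) → a = 0 ∨ b = 0)
    (h2 : ∀ w : R, w + w = 0 → w = 0) (p q : R)
    (h : ∀ r : R, cm p (cm q r) = 0) :
    (∀ w : R, cm p w = 0) ∨ (∀ w : R, cm q w = 0) := by
  have M1 : ∀ x y : R, cm q x * cm p y + cm p x * cm q y = 0 := by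
    intro x y
    have e : cm p (cm q (x * y)) =
        cm q x * cm p y + cm p x * cm q y + (cm p (cm q x)) * y + x * (cm p (cm q y)) := by
      simp only [cm]; noncomm_ring
    rw [h (x*y), h x, h y, zero_mul, mul_zero, add_zero, add_zero] at e
    exact e.symm
  have M2 : ∀ x z y : R, cm q x * z * cm p y + cm p x * z * cm q y = 0 := by
    intro x z y
    have e : cm q x * z * cm p y + cm p x * z * cm q y =
        (cm q (x * z) * cm p y + cm p (x * z) * cm q y)
          - x * (cm q z * cm p y + cm p z * cm q y) := by
      simp only [cm]; noncomm_ring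
    rw [M1 (x*z) y, M1 z y, mul_zero, sub_zero] at e
    exact e
  by_cases hp : ∀ w : R, cm p w = 0
  · exact Or.inl hp
  · right
    push_neg at hp
    obtain ⟨x₀, hx₀⟩ := hp
    have key : ∀ y w : R, cm p y * w * cm q y - cm q y * w * cm p y = 0 := by
      intro y w
      rcases hprime (cm p x₀) (cm p y * w * cm q y - cm q y * w * cm p y)
        (fun z => by
          have e : cm p x₀ * z * (cm p y * w * cm q y - cm q y * w * cm p y) =
              (cm q x₀ * (z * cm p y * w) * cm p y + cm p x₀ * (z * cm p y * w) * cm q y)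
              - (cm q x₀ * z * cm p y + cm p x₀ * z * cm q y) * (w * cm p y) := by
            noncomm_ring
          rw [M2 x₀ (z * cm p y * w) y, M2 x₀ z y, zero_mul, sub_zero] at e
          exact e) with h' | h'
      · exact absurd h' hx₀
      · exact h'
    have key2 : ∀ y w : R, cm p y * w * cm q y = 0 := by
      intro y w
      have h1 := M2 y w y
      have h3 := key y w
      have e : cm p y * w * cm q y + cm p y * w * cm q y =
          (cm q y * w * cm p y + cm p y * w * cm q y)
            + (cm p y * w * cm q y - cm q y * w * cm p y) := by noncomm_ring
      rw [h1, h3, add_zero] at e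
      exact h2 _ e
    have pw : ∀ y : R, cm p y = 0 ∨ cm q y = 0 := fun y =>
      hprime (cm p y) (cm q y) (fun w => key2 y w)
    intro w
    by_contra hw
    have hpw : cm p w = 0 := (pw w).resolve_right hw
    have hqx₀ : cm q x₀ = 0 := (pw x₀).resolve_left hx₀
    have hsum : cm p (w + x₀) ≠ 0 := by
      rw [cm_add, hpw, zero_add]; exact hx₀
    have := (pw (w + x₀)).resolve_left hsum
    rw [cm_add, hqx₀, add_zero] at this
    exact hw this

end StmtAux

section StmtStar
variable {R : Type*} [NonUnitalRing R] [StarRing R]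

private def sk (x : R) : R := x - star x
private def sy (x : R) : R := x + star x

private lemma caseIb (h2 : ∀ w : R, w + w = 0 → w = 0)
    (hT0 : ∀ u v : R, cm (sk u) (sk v) = 0) :
    ∀ x y r : R, cm (sk x * sk y) r = 0 := by
  have c1 : ∀ u v q : R, cm (sk u) q * sk v + sk v * cm (sk u) (star q) = 0 := by
    intro u v q
    have e : cm (sk u) q * sk v + sk v * cm (sk u) (star q)
        = cm (sk u) (sk (q * sk v)) - q * cm (sk u) (sk v) - cm (sk u) (sk v) * star q := by
      simp only [sk, cm, star_mul, star_sub, star_star]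
      noncomm_ring
    rw [hT0 u (q * sk v), hT0 u v] at e
    simpa using e
  have c1t : ∀ u v q : R, sk v * cm (sk u) q + cm (sk u) (star q) * sk v = 0 := by
    intro u v q
    have e : sk v * cm (sk u) q + cm (sk u) (star q) * sk v
        = cm (sk u) (sk (sk v * q)) - cm (sk u) (sk v) * q - star q * cm (sk u) (sk v) := by
      simp only [sk, cm, star_mul, star_sub, star_star]
      noncomm_ring
    rw [hT0 u (sk v * q), hT0 u v] at e
    simpa using e
  intro x y r
  have E1 : cm (sk x * sk y) r = sk x * cm (sk y) r + cm (sk x) r * sk y := by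
    simp only [cm]; noncomm_ring
  have h1 : sk x * cm (sk y) r = -(cm (sk y) (star r) * sk x) :=
    eq_neg_of_add_eq_zero_left (by have := c1t y x r; linear_combination (norm := noncomm_ring) this)
  have h2' : cm (sk x) r * sk y = -(sk y * cm (sk x) (star r)) :=
    eq_neg_of_add_eq_zero_left (c1 x y r)
  have E3 : cm (sk y) (star r) * sk x + sk y * cm (sk x) (star r) = cm (sk y * sk x) (star r) := by
    simp only [cm]; noncomm_ring
  have E4 : sk y * sk x = sk x * sk y := by
    have := hT0 y x
    simp only [cm, sub_eq_zero] at this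
    exact this
  have E2 : cm (sk x * sk y) r = -(cm (sk x * sk y) (star r)) := by
    rw [E1, h1, h2', ← neg_add, E3, E4]
  have E6 : cm (sk x * sk y) (sk r) = 0 := by
    have e : cm (sk x * sk y) (sk r) = sk x * cm (sk y) (sk r) + cm (sk x) (sk r) * sk y := by
      simp only [cm]; noncomm_ring
    rw [e, hT0 y r, hT0 x r, mul_zero, zero_mul, add_zero]
  have H : cm (sk x * sk y) (star r) = -(cm (sk x * sk y) r) := by rw [E2, neg_neg]
  have E5 : cm (sk x * sk y) r + cm (sk x * sk y) r = 0 := by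
    have e : cm (sk x * sk y) r + cm (sk x * sk y) r
        = cm (sk x * sk y) (sk r) + (cm (sk x * sk y) (star r) + cm (sk x * sk y) r) := by
      simp only [cm, sk]; noncomm_ring
    rw [E6, zero_add, H, neg_add_cancel] at e
    exact e
  exact h2 _ E5

private lemma caseIa (hprime : ∀ a b : R, (∀ x : R, a * x * b = 0) → a = 0 ∨ b = 0)
    (h2 : ∀ w : R, w + w = 0 → w = 0)
    (hTT : ∀ u v r : R, cm (cm (sk u) (sk v)) r = 0)
    (x₁ y₁ : R) (hz0 : cm (sk x₁) (sk y₁) ≠ 0) :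
    ∀ u v : R, cm u v = 0 := by
  set z := cm (sk x₁) (sk y₁) with hzdef
  have zc : ∀ r : R, z * r = r * z := by
    intro r
    have := hTT x₁ y₁ r
    simpa [cm, sub_eq_zero, hzdef] using this
  have zst : star z = -z := by
    simp only [hzdef, cm, sk, star_sub, star_mul, star_star]
    noncomm_ring
  have zcm : ∀ A B : R, cm (z * A) B = z * cm A B := by
    intro A B
    simp only [cm]
    rw [mul_assoc z A B, ← mul_assoc B z A, ← zc B, mul_assoc z B A, ← mul_sub]
  have zcm' : ∀ A B : R, cm A (z * B) = z * cm A B := by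
    intro A B
    simp only [cm]
    rw [← mul_assoc A z B, ← zc A, mul_assoc z A B, mul_assoc z B A, ← mul_sub]
  have m1 : ∀ w : R, sk (z * w) = z * sy w := by
    intro w
    simp only [sk, sy, star_mul, zst]
    rw [mul_neg, sub_neg_eq_add, ← zc (star w), mul_add]
  have step1 : ∀ w v r : R, cm (cm (sy w) (sk v)) r = 0 := by
    intro w v r
    have h := hTT (z * w) v r
    rw [m1, zcm, zcm] at h
    exact aux_zcancel hprime z zc (by simpa [hzdef] using hz0) _ h
  have step2 : ∀ w v r : R, cm (cm (sy w) (sy v)) r = 0 := by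
    intro w v r
    have h := hTT (z * w) (z * v) r
    rw [m1, m1, zcm, zcm', zcm, zcm] at h
    exact aux_zcancel hprime z zc (by simpa [hzdef] using hz0) _
      (aux_zcancel hprime z zc (by simpa [hzdef] using hz0) _ h)
  have step3 : ∀ u v r : R, cm (cm u v) r = 0 := by
    intro u v r
    have e : cm (cm u v) r + cm (cm u v) r + (cm (cm u v) r + cm (cm u v) r)
        = cm (cm (sy u) (sy v)) r + cm (cm (sy u) (sk v)) r
          + (cm (cm (sk u) (sy v)) r + cm (cm (sk u) (sk v)) r) := by
      simp only [cm, sk, sy]; noncomm_ring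
    have hmix : cm (cm (sk u) (sy v)) r = 0 := by
      have e2 : cm (cm (sk u) (sy v)) r = -(cm (cm (sy v) (sk u)) r) := by
        simp only [cm]; noncomm_ring
      rw [e2, step1 v u r, neg_zero]
    rw [step2 u v r, step1 u v r, hmix, hTT u v r] at e
    simp only [zero_add, add_zero] at e
    exact h2 _ (h2 _ e)
  intro u v
  have ccent : ∀ r : R, cm u v * r = r * cm u v := by
    intro r
    have := step3 u v r
    simpa [cm, sub_eq_zero] using this
  have ucent : ∀ r : R, (u * cm u v) * r = r * (u * cm u v) := by
    intro r
    have e : cm u (u * v) = u * cm u v := by simp only [cm]; noncomm_ring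
    have := step3 u (u * v) r
    rw [e] at this
    simpa [cm, sub_eq_zero] using this
  have csq : cm u v * cm u v = 0 := by
    have h1 : u * cm u v * v = v * (u * cm u v) := ucent v
    have h2c : cm u v * v = v * cm u v := ccent v
    calc cm u v * cm u v = (u * v) * cm u v - (v * u) * cm u v := by
          simp only [cm]; noncomm_ring
      _ = u * cm u v * v - v * (u * cm u v) := by
          rw [mul_assoc u v (cm u v), ← h2c, ← mul_assoc u (cm u v) v, mul_assoc v u (cm u v)]
      _ = 0 := by rw [h1, sub_self]
  exact aux_znil hprime _ ccent csq

private lemma caseIIA1 (hprime : ∀ a b : R, (∀ x : R, a * x * b = 0) → a = 0 ∨ b = 0)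
    (h2 : ∀ w : R, w + w = 0 → w = 0) (b : R)
    (hb' : ∃ w : R, cm b w ≠ 0)
    (hK : ∀ x y : R, cm b (cm (sk x) (sk y)) = 0)
    (hsZ : ∀ r : R, cm (b - star b) r = 0)
    (hs0 : b - star b ≠ 0) :
    ∀ z w : R, cm (sk z) w = 0 := by
  set s := b - star b with hsdef
  have sc : ∀ r : R, s * r = r * s := by
    intro r; have := hsZ r; simpa [cm, sub_eq_zero] using this
  have sst : star s = -s := by
    simp only [hsdef, star_sub, star_star]; noncomm_ring
  have scm : ∀ A B : R, cm (s * A) B = s * cm A B := by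
    intro A B
    simp only [cm]
    rw [← mul_assoc B s A, ← sc B, mul_assoc s A B, mul_assoc s B A, ← mul_sub]
  have scm' : ∀ A B : R, cm A (s * B) = s * cm A B := by
    intro A B
    simp only [cm]
    rw [← mul_assoc A s B, ← sc A, mul_assoc s A B, mul_assoc s B A, ← mul_sub]
  have m1 : ∀ w : R, sk (s * w) = s * sy w := by
    intro w
    simp only [sk, sy, star_mul, sst]
    rw [mul_neg, sub_neg_eq_add, ← sc (star w), mul_add]
  have t3 : ∀ w z : R, cm b (cm (sy w) (sk z)) = 0 := by
    intro w z
    have h := hK (s * w) z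
    rw [m1, scm, scm'] at h
    exact aux_zcancel hprime s sc hs0 _ h
  have t4 : ∀ z r : R, cm b (cm (sk z) r) = 0 := by
    intro z r
    have e : cm (sk z) r + cm (sk z) r = cm (sk z) (sy r) + cm (sk z) (sk r) := by
      simp only [cm, sk, sy]; noncomm_ring
    have e2 : cm b (cm (sk z) r + cm (sk z) r)
        = cm b (cm (sk z) (sy r)) + cm b (cm (sk z) (sk r)) := by
      rw [e, cm_add]
    have e3 : cm b (cm (sk z) (sy r)) = -(cm b (cm (sy r) (sk z))) := by
      have : cm (sk z) (sy r) = -(cm (sy r) (sk z)) := by simp only [cm]; noncomm_ring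
      rw [this]
      simp only [cm]; noncomm_ring
    rw [e3, t3 r z, neg_zero, zero_add, hK z r] at e2
    have e4 : cm b (cm (sk z) r + cm (sk z) r)
        = cm b (cm (sk z) r) + cm b (cm (sk z) r) := cm_add _ _ _
    rw [e4] at e2
    exact h2 _ e2
  intro z
  rcases aux_lemC hprime h2 b (sk z) (t4 z) with hL | hR
  · obtain ⟨w₀, hw₀⟩ := hb'
    exact absurd (hL w₀) hw₀
  · exact hR

private lemma caseIIA2 (hprime : ∀ a b : R, (∀ x : R, a * x * b = 0) → a = 0 ∨ b = 0)
    (h2 : ∀ w : R, w + w = 0 → w = 0) (b : R)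
    (hb' : ∃ w : R, cm b w ≠ 0)
    (hK : ∀ x y : R, cm b (cm (sk x) (sk y)) = 0)
    (hH : ∀ x y : R, cm b (cm (sy x) (sy y)) = 0)
    (hbb : star b = b) : False := by
  obtain ⟨w₀, hw₀⟩ := hb'
  -- d1
  have d1 : ∀ w : R, cm b (cm b (sy w)) = 0 := by
    intro w
    have h := hH b w
    have e : cm (sy b) (sy w) = cm b (sy w) + cm b (sy w) := by
      simp only [sy, hbb, cm]; noncomm_ring
    rw [e, cm_add] at h
    exact h2 _ h
  -- d2
  have memT1 : ∀ w : R, sk ((b + b) * sy w) = cm (b + b) (sy w) := by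
    intro w
    simp only [sk, sy, cm, star_mul, star_add, hbb, star_star]
    noncomm_ring
  have d2 : ∀ w z : R, cm (cm b (sy w)) (cm b (sk z)) = 0 := by
    intro w z
    have h := hK ((b + b) * sy w) z
    rw [memT1] at h
    have e : cm b (cm (cm (b+b) (sy w)) (sk z))
        = cm b (cm (cm b (sy w)) (sk z)) + cm b (cm (cm b (sy w)) (sk z)) := by
      simp only [cm]; noncomm_ring
    rw [e] at h
    have h3 := h2 _ h
    rw [jacobi, d1 w] at h3
    simp only [cm, zero_mul, mul_zero, sub_zero, zero_sub, neg_zero, zero_add] at h3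
    simpa [cm] using h3
  -- d3
  have memH1 : ∀ z : R, sy (-(sk z * (b + b))) = cm (b + b) (sk z) := by
    intro z
    simp only [sy, sk, cm, star_neg, star_mul, star_sub, star_add, star_star, hbb]
    noncomm_ring
  have d3 : ∀ z w : R, cm (cm b (cm b (sk z))) (sy w) = 0 := by
    intro z w
    have h := hH (-(sk z * (b + b))) w
    rw [memH1] at h
    have e : cm b (cm (cm (b+b) (sk z)) (sy w))
        = cm b (cm (cm b (sk z)) (sy w)) + cm b (cm (cm b (sk z)) (sy w)) := by
      simp only [cm]; noncomm_ring
    rw [e] at h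
    have h3 := h2 _ h
    rw [jacobi] at h3
    have e2 : cm (cm b (sk z)) (cm b (sy w)) = -(cm (cm b (sy w)) (cm b (sk z))) := by
      simp only [cm]; noncomm_ring
    rw [e2, d2 w z, neg_zero, add_zero] at h3
    exact h3
  -- d4
  have memT2 : ∀ z : R, sk ((b + b) * cm (b + b) (sk z)) = cm (b + b) (cm (b + b) (sk z)) := by
    intro z
    simp only [sk, cm, star_mul, star_sub, star_add, star_star, hbb]
    noncomm_ring
  have d4 : ∀ z z' : R, cm b (cm (cm b (cm b (sk z))) (sk z')) = 0 := by
    intro z z'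
    have h := hK ((b + b) * cm (b + b) (sk z)) z'
    rw [memT2] at h
    have e : cm b (cm (cm (b+b) (cm (b+b) (sk z))) (sk z'))
        = cm b (cm (cm b (cm b (sk z))) (sk z')) + cm b (cm (cm b (cm b (sk z))) (sk z'))
          + (cm b (cm (cm b (cm b (sk z))) (sk z')) + cm b (cm (cm b (cm b (sk z))) (sk z'))) := by
      simp only [cm]; noncomm_ring
    rw [e] at h
    exact h2 _ (h2 _ h)
  -- d5
  have d5 : ∀ z w : R, cm (cm b (cm b (sk z))) w = 0 := by
    intro z
    have sub : ∀ r : R, cm b (cm (cm b (cm b (sk z))) r) = 0 := by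
      intro r
      have e : cm (cm b (cm b (sk z))) r + cm (cm b (cm b (sk z))) r
          = cm (cm b (cm b (sk z))) (sy r) + cm (cm b (cm b (sk z))) (sk r) := by
        simp only [cm, sk, sy]; noncomm_ring
      have e2 := congrArg (cm b) e
      rw [cm_add, cm_add, d3 z r, cm_zero', zero_add, d4 z r] at e2
      exact h2 _ e2
    rcases aux_lemC hprime h2 b (cm b (cm b (sk z))) sub with hL | hR
    · exact absurd (hL w₀) hw₀
    · exact hR
  -- d6
  have d6 : ∀ u w : R, cm (cm b (cm b u)) w = 0 := by
    intro u w
    have e : cm b (cm b u) + cm b (cm b u)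
        = cm b (cm b (sy u)) + cm b (cm b (sk u)) := by
      simp only [cm, sk, sy]; noncomm_ring
    rw [d1 u, zero_add] at e
    have e2 : cm (cm b (cm b u) + cm b (cm b u)) w = 0 := by
      rw [e]; exact d5 u w
    have e3 : cm (cm b (cm b u) + cm b (cm b u)) w = cm (cm b (cm b u)) w + cm (cm b (cm b u)) w := by
      simp only [cm]; noncomm_ring
    rw [e3] at e2
    exact h2 _ e2
  -- commutation forms
  have dcent : ∀ u r : R, cm b (cm b u) * r = r * cm b (cm b u) := by
    intro u r
    have := d6 u r
    simpa [cm, sub_eq_zero] using this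
  -- d7
  have d7 : ∀ u w : R, cm b (cm b u) * cm b w = 0 := by
    intro u w
    have e1 : cm b (cm b (u * b)) = cm b (cm b u) * b := by
      simp only [cm]; noncomm_ring
    have Dbcent : ∀ w' : R, (cm b (cm b u) * b) * w' = w' * (cm b (cm b u) * b) := by
      intro w'
      have := d6 (u * b) w'
      rw [e1] at this
      simpa [cm, sub_eq_zero] using this
    calc cm b (cm b u) * cm b w
        = (cm b (cm b u) * b) * w - (cm b (cm b u) * w) * b := by
          simp only [cm]; noncomm_ring
      _ = w * (cm b (cm b u) * b) - (w * cm b (cm b u)) * b := by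
          rw [Dbcent w, dcent u w]
      _ = 0 := by rw [← mul_assoc w _ b, sub_self]
  -- d8
  have d8 : ∀ u : R, cm b (cm b u) = 0 := by
    intro u
    rcases hprime (cm b (cm b u)) (cm b w₀) (fun x => by
      rw [dcent u x, mul_assoc, d7 u w₀, mul_zero]) with h | h
    · exact h
    · exact absurd h hw₀
  -- d9
  have d9 : ∀ u v : R, cm b u * cm b v = 0 := by
    intro u v
    have e : cm b (cm b (u * v)) = cm b (cm b u) * v + (cm b u * cm b v + cm b u * cm b v)
        + u * cm b (cm b v) := by
      simp only [cm]; noncomm_ring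
    rw [d8 (u*v), d8 u, d8 v, zero_mul, mul_zero, add_zero] at e
    have := e.symm
    rw [zero_add] at this
    exact h2 _ this
  -- d10
  have d10 : ∀ z : R, cm b w₀ * z * cm b w₀ = 0 := by
    intro z
    have e : cm b w₀ * z * cm b w₀
        = cm b w₀ * cm b (z * w₀) - (cm b w₀ * cm b z) * w₀ := by
      simp only [cm]; noncomm_ring
    rw [e, d9 w₀ (z * w₀), d9 w₀ z, zero_mul, sub_zero]
  rcases hprime (cm b w₀) (cm b w₀) d10 with h | h
  · exact absurd h hw₀
  · exact absurd h hw₀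

private lemma caseIIB (hprime : ∀ a b : R, (∀ x : R, a * x * b = 0) → a = 0 ∨ b = 0)
    (h2 : ∀ w : R, w + w = 0 → w = 0) (b : R)
    (hK : ∀ x y : R, cm b (cm (sk x) (sk y)) = 0)
    (hH : ∀ x y : R, cm b (cm (sy x) (sy y)) = 0)
    (hKs : ∀ x y : R, cm (star b) (cm (sk x) (sk y)) = 0)
    (hHs : ∀ x y : R, cm (star b) (cm (sy x) (sy y)) = 0)
    (hsN : ∃ r : R, cm (b - star b) r ≠ 0) :
    ∀ z z' w : R, cm (cm (sk z) (sk z')) w = 0 := by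
  set s := b - star b with hsdef
  have sst : star s = -s := by rw [hsdef, star_sub, star_star, neg_sub]
  have eK : ∀ x y : R, cm s (cm (sk x) (sk y)) = 0 := by
    intro x y
    have e : cm s (cm (sk x) (sk y)) = cm b (cm (sk x) (sk y)) - cm (star b) (cm (sk x) (sk y)) := by
      rw [hsdef]; simp only [cm]; noncomm_ring
    rw [e, hK, hKs, sub_zero]
  have eH : ∀ x y : R, cm s (cm (sy x) (sy y)) = 0 := by
    intro x y
    have e : cm s (cm (sy x) (sy y)) = cm b (cm (sy x) (sy y)) - cm (star b) (cm (sy x) (sy y)) := by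
      rw [hsdef]; simp only [cm]; noncomm_ring
    rw [e, hH, hHs, sub_zero]
  have e2 : ∀ z : R, cm s (cm s (sk z)) = 0 := by
    intro z
    have h := eK b z
    rw [show sk b = s from rfl] at h
    exact h
  have hcs : ∀ x y : R, cm s ((x * y - y * x) - star (x * y - y * x)) = 0 := by
    intro x y
    have e : ((x * y - y * x) - star (x * y - y * x)) + ((x * y - y * x) - star (x * y - y * x))
        = cm (sy x) (sy y) + cm (sk x) (sk y) := by
      simp only [sy, sk, cm, star_sub, star_mul]
      noncomm_ring
    have e2' := congrArg (cm s) e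
    rw [cm_add, cm_add, eH, eK, add_zero] at e2'
    exact h2 _ e2'
  have e3 : ∀ y : R, s * cm s (cm s y) + cm s (cm s y) * s = 0 := by
    intro y
    have h := hcs s (s * y)
    have eexp : (s * (s * y) - (s * y) * s) - star (s * (s * y) - (s * y) * s)
        = s * cm s y + cm s (star y) * s := by
      simp only [cm, star_sub, star_mul, sst]
      noncomm_ring
    rw [eexp] at h
    have eexp2 : cm s (s * cm s y + cm s (star y) * s)
        = s * cm s (cm s y) + cm s (cm s (star y)) * s := by
      simp only [cm]; noncomm_ring
    rw [eexp2] at h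
    have epar : cm s (cm s (star y)) = cm s (cm s y) := by
      have h' : cm s (cm s y) - cm s (cm s (star y)) = cm s (cm s (sk y)) := by
        simp only [cm, sk]; noncomm_ring
      rw [e2 y] at h'
      exact (sub_eq_zero.mp h').symm
    rw [epar] at h
    exact h
  have e4 : ∀ y : R, cm (s * s) (cm s y) = 0 := by
    intro y
    have e : cm (s * s) (cm s y) = s * cm s (cm s y) + cm s (cm s y) * s := by
      simp only [cm]; noncomm_ring
    rw [e, e3]
  have zcent : ∀ w : R, cm (s * s) w = 0 := by
    rcases aux_lemC hprime h2 (s * s) s e4 with hL | hR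
    · exact hL
    · obtain ⟨r₁, hr₁⟩ := hsN
      exact absurd (hR r₁) hr₁
  have zcc : ∀ r : R, (s * s) * r = r * (s * s) := by
    intro r; have := zcent r; simpa [cm, sub_eq_zero] using this
  have e6 : ∀ z : R, s * sk z * s = (s * s) * sk z := by
    intro z
    have e : (s * s * sk z - s * sk z * s) + (s * s * sk z - s * sk z * s)
        = cm s (cm s (sk z)) + cm (s * s) (sk z) := by
      simp only [cm]; noncomm_ring
    rw [e2 z, zero_add, zcent (sk z)] at e
    have := h2 _ e
    exact (sub_eq_zero.mp this).symm
  have e7 : ∀ z : R, (s * s) * cm s (sk z) = 0 := by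
    intro z
    have eA : cm s ((s * s) * sk z) = (s * s) * cm s (sk z) := by
      simp only [cm]; noncomm_ring
    have eB : cm s (s * sk z * s) + (s * s) * cm s (sk z) = s * cm (s * s) (sk z) := by
      simp only [cm]; noncomm_ring
    rw [zcent (sk z), mul_zero, e6 z, eA] at eB
    exact h2 _ eB
  by_cases hζ : s * s = 0
  · -- II.B.2 : ζ = 0 ⇒ contradiction
    exfalso
    have sts : ∀ z : R, s * sk z * s = 0 := by
      intro z; rw [e6 z, hζ, zero_mul]
    have hskw : ∀ w : R, s * w * s = s * star w * s := by
      intro w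
      have h := sts w
      have e : s * sk w * s = s * w * s - s * star w * s := by
        simp only [sk]; noncomm_ring
      rw [e] at h
      exact sub_eq_zero.mp h
    have μ2 : ∀ a c : R, (s * a * s) * c * s + (s * c * s) * star a * s = 0 := by
      intro a c
      have h := sts (a * s * c)
      have e : s * sk (a * s * c) * s
          = (s * a * s) * c * s + (s * star c * s) * star a * s := by
        simp only [sk, star_mul, sst]
        noncomm_ring
      rw [e, ← hskw c] at h
      exact h
    have ν4 : ∀ a z c : R, (s * a * s) * z * (s * c * s) = -((s * z * s) * c * (s * a * s)) := by
      intro a z c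
      have h := μ2 a (z * s * c)
      have e1 : (s * a * s) * (z * s * c) * s = (s * a * s) * z * (s * c * s) := by
        noncomm_ring
      have e2' : (s * (z * s * c) * s) * star a * s = (s * z * s) * c * (s * star a * s) := by
        noncomm_ring
      rw [e1, e2', ← hskw a] at h
      exact eq_neg_of_add_eq_zero_left h
    have Ezero : ∀ a z : R, (s * a * s) * z * (s * a * s) = 0 := by
      intro a z
      have t1 := ν4 a z a
      have t2 := ν4 z a a
      have t3 := ν4 a a z
      rw [t2, t3] at t1
      simp only [neg_neg] at t1
      have : (s * a * s) * z * (s * a * s) + (s * a * s) * z * (s * a * s) = 0 := by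
        nth_rewrite 2 [t1]
        exact add_neg_cancel _
      exact h2 _ this
    have f0 : ∀ a : R, s * a * s = 0 := by
      intro a
      rcases hprime (s * a * s) (s * a * s) (fun z => Ezero a z) with h | h <;> exact h
    have s0 : s = 0 := by
      rcases hprime s s f0 with h | h <;> exact h
    obtain ⟨r₁, hr₁⟩ := hsN
    rw [s0] at hr₁
    simp [cm] at hr₁
  · -- II.B.1 : ζ ≠ 0
    have δT0 : ∀ z : R, cm s (sk z) = 0 := by
      intro z
      exact aux_zcancel hprime (s * s) zcc hζ _ (e7 z)
    have Ψ : ∀ w z : R, cm s w * sk z + sk z * cm s (star w) = 0 := by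
      intro w z
      have h := δT0 (w * sk z)
      have e : cm s (sk (w * sk z))
          = cm s w * sk z + sk z * cm s (star w) + (w * cm s (sk z) + cm s (sk z) * star w) := by
        simp only [cm, sk, star_mul, star_sub, star_star]
        noncomm_ring
      rw [e, δT0 z, mul_zero, zero_mul, add_zero, add_zero] at h
      exact h
    have Ψa : ∀ w z : R, cm s w * sk z = -(sk z * cm s (star w)) := fun w z =>
      eq_neg_of_add_eq_zero_left (Ψ w z)
    have Ψ2 : ∀ (w z z' : R), cm s w * (sk z * sk z') = (sk z * sk z') * cm s w := by
      intro w z z'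
      have hx := Ψa (star w) z'
      rw [star_star] at hx
      calc cm s w * (sk z * sk z') = (cm s w * sk z) * sk z' := by rw [mul_assoc]
        _ = -(sk z * cm s (star w)) * sk z' := by rw [Ψa w z]
        _ = -(sk z * (cm s (star w) * sk z')) := by rw [neg_mul, mul_assoc]
        _ = -(sk z * -(sk z' * cm s w)) := by rw [hx]
        _ = sk z * (sk z' * cm s w) := by rw [mul_neg, neg_neg]
        _ = (sk z * sk z') * cm s w := by rw [mul_assoc]
    have Ψ3 : ∀ (z z' r : R), cm (cm (sk z) (sk z')) (cm s r) = 0 := by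
      intro z z' r
      have h1 : cm (sk z * sk z') (cm s r) = 0 := by
        have e0 : cm (sk z * sk z') (cm s r)
            = sk z * sk z' * cm s r - cm s r * (sk z * sk z') := rfl
        rw [e0, ← Ψ2 r z z', sub_self]
      have h1' : cm (sk z' * sk z) (cm s r) = 0 := by
        have e0 : cm (sk z' * sk z) (cm s r)
            = sk z' * sk z * cm s r - cm s r * (sk z' * sk z) := rfl
        rw [e0, ← Ψ2 r z' z, sub_self]
      have e : cm (cm (sk z) (sk z')) (cm s r)
          = cm (sk z * sk z') (cm s r) - cm (sk z' * sk z) (cm s r) := by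
        simp only [cm]; noncomm_ring
      rw [e, h1, h1', sub_zero]
    intro z z' w
    rcases aux_lemC hprime h2 (cm (sk z) (sk z')) s (fun r => Ψ3 z z' r) with hL | hR
    · exact hL w
    · obtain ⟨r₁, hr₁⟩ := hsN
      exact absurd (hR r₁) hr₁

end StmtStar

/-- Lemma: Let `R` be a prime ring with involution `*`, `char R ≠ 2`, and `b ∈ R ∖ Z(R)`.
If `[b, [x, y] - [x, y]*] = 0` for all `x, y ∈ R`, then `K₀(R)² ⊆ Z(R)`. -/
theorem stmt_18 {R : Type*} [NonUnitalRing R] [StarRing R]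
    (hprime : ∀ a b : R, (∀ x : R, a * x * b = 0) → a = 0 ∨ b = 0)
    (hchar : ∃ x : R, x + x ≠ 0)
    (b : R) (hb : ∃ r : R, b * r ≠ r * b)
    (hcomm : ∀ x y : R,
      b * ((x * y - y * x) - star (x * y - y * x)) =
        ((x * y - y * x) - star (x * y - y * x)) * b) :
    ∀ x y r : R, ((x - star x) * (y - star y)) * r = r * ((x - star x) * (y - star y)) := by
  have h2 : ∀ w : R, w + w = 0 → w = 0 := aux_h2 hprime hchar
  obtain ⟨rb, hrb⟩ := hb
  have hb' : ∃ w : R, cm b w ≠ 0 := ⟨rb, by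
    rw [cm_def]
    exact sub_ne_zero_of_ne hrb⟩
  -- star b satisfies the same commuting hypothesis
  have hcomms : ∀ x y : R,
      star b * ((x * y - y * x) - star (x * y - y * x)) =
        ((x * y - y * x) - star (x * y - y * x)) * star b := by
    intro x y
    have h := congrArg star (hcomm x y)
    rw [star_mul, star_mul] at h
    have hC : star ((x * y - y * x) - star (x * y - y * x))
        = -((x * y - y * x) - star (x * y - y * x)) := by
      rw [star_sub, star_star]
      exact (neg_sub _ _).symm
    rw [hC, neg_mul, mul_neg, neg_inj] at h
    exact h.symm
  -- the four basic centralizing facts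
  have hK : ∀ x y : R, cm b (cm (sk x) (sk y)) = 0 := by
    intro x y
    have h := hcomm x (y - star y)
    have e : (x * (y - star y) - (y - star y) * x)
        - star (x * (y - star y) - (y - star y) * x) = cm (sk x) (sk y) := by
      simp only [cm, sk, star_sub, star_mul, star_star]
      noncomm_ring
    rw [e] at h
    rw [cm_def]
    exact sub_eq_zero_of_eq h
  have hH : ∀ x y : R, cm b (cm (sy x) (sy y)) = 0 := by
    intro x y
    have h := hcomm x (y + star y)
    have e : (x * (y + star y) - (y + star y) * x)
        - star (x * (y + star y) - (y + star y) * x) = cm (sy x) (sy y) := by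
      simp only [cm, sy, star_add, star_sub, star_mul, star_star]
      noncomm_ring
    rw [e] at h
    rw [cm_def]
    exact sub_eq_zero_of_eq h
  have hKs : ∀ x y : R, cm (star b) (cm (sk x) (sk y)) = 0 := by
    intro x y
    have h := hcomms x (y - star y)
    have e : (x * (y - star y) - (y - star y) * x)
        - star (x * (y - star y) - (y - star y) * x) = cm (sk x) (sk y) := by
      simp only [cm, sk, star_sub, star_mul, star_star]
      noncomm_ring
    rw [e] at h
    rw [cm_def]
    exact sub_eq_zero_of_eq h
  have hHs : ∀ x y : R, cm (star b) (cm (sy x) (sy y)) = 0 := by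
    intro x y
    have h := hcomms x (y + star y)
    have e : (x * (y + star y) - (y + star y) * x)
        - star (x * (y + star y) - (y + star y) * x) = cm (sy x) (sy y) := by
      simp only [cm, sy, star_add, star_sub, star_mul, star_star]
      noncomm_ring
    rw [e] at h
    rw [cm_def]
    exact sub_eq_zero_of_eq h
  intro x y r
  suffices hG : cm (sk x * sk y) r = 0 by
    rw [cm_def] at hG
    have := sub_eq_zero.mp hG
    simpa [sk] using this
  by_cases hTT : ∀ u v r' : R, cm (cm (sk u) (sk v)) r' = 0
  · by_cases hT0 : ∀ u v : R, cm (sk u) (sk v) = 0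
    · exact caseIb h2 hT0 x y r
    · push_neg at hT0
      obtain ⟨x₁, y₁, hz0⟩ := hT0
      exact caseIa hprime h2 hTT x₁ y₁ hz0 (sk x * sk y) r
  · push_neg at hTT
    obtain ⟨x₀, y₀, r₀, hX⟩ := hTT
    exfalso
    by_cases hsZ : ∀ r' : R, cm (b - star b) r' = 0
    · by_cases hs0 : b - star b = 0
      · have hbb : star b = b := by
          rw [sub_eq_zero] at hs0
          exact hs0.symm
        exact caseIIA2 hprime h2 b hb' hK hH hbb
      · have hall := caseIIA1 hprime h2 b hb' hK hsZ hs0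
        apply hX
        have hz : cm (sk x₀) (sk y₀) = 0 := hall x₀ (sk y₀)
        rw [hz]
        simp [cm]
    · push_neg at hsZ
      have hall := caseIIB hprime h2 b hK hH hKs hHs hsZ
      exact hX (hall x₀ y₀ r₀)
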